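/- Consider the discrete-time system x_{t+1} = Ā φ(x_t) + w_t, t = 0,…,T−1, under Assumption 1 and Assumption 2. Then for every t ∈ {0,…,T−1}, the ψ2-norm of ‖φ(x_t)‖₂ is at most √n L σ / (1 − ρL), i.e. inf{k > 0 : E[exp(‖φ(x_t)‖₂²/k²)] ≤ e} ≤ √n L σ / (1 − ρL). -/

import Mathlib

open MeasureTheory

lemma psg_coord {Ω : Type*} [MeasurableSpace Ω] (P : Measure Ω) [IsProbabilityMeasure P]
    {n : ℕ} (hn : 0 < n) {σ : ℝ} (hσ : 0 < σ) (v : Ω → EuclideanSpace ℝ (Fin n))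
    (hv : Measurable v)
    (hint : ∀ i, Integrable (fun ω => Real.exp ((v ω i) ^ 2 / σ ^ 2)) P)
    (hsub : ∀ i, ∫ ω, Real.exp ((v ω i) ^ 2 / σ ^ 2) ∂P ≤ Real.exp 1) :
    Integrable (fun ω => Real.exp (‖v ω‖ ^ 2 / (n * σ ^ 2))) P ∧
      ∫ ω, Real.exp (‖v ω‖ ^ 2 / (n * σ ^ 2)) ∂P ≤ Real.exp 1 := by
  have hn' : (n : ℝ) ≠ 0 := Nat.cast_ne_zero.2 hn.ne'
  have hσ' : σ ≠ 0 := hσ.ne'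
  have hnorm : ∀ ω, ‖v ω‖ ^ 2 = ∑ i, (v ω i) ^ 2 := by
    intro ω
    rw [EuclideanSpace.norm_eq, Real.sq_sqrt (Finset.sum_nonneg fun i _ => sq_nonneg _)]
    simp [Real.norm_eq_abs, sq_abs]
  have hpt : ∀ ω, Real.exp (‖v ω‖ ^ 2 / (n * σ ^ 2)) ≤
      ∑ i : Fin n, (1 / n : ℝ) * Real.exp ((v ω i) ^ 2 / σ ^ 2) := by
    intro ω
    have hw : ∑ _i : Fin n, (1 / n : ℝ) = 1 := by
      rw [Finset.sum_const, Finset.card_univ, Fintype.card_fin, nsmul_eq_mul]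
      field_simp
    have hJ := convexOn_exp.map_sum_le (t := Finset.univ)
      (w := fun _ : Fin n => (1 / n : ℝ)) (p := fun i => (v ω i) ^ 2 / σ ^ 2)
      (fun i _ => by positivity) hw (fun i _ => Set.mem_univ _)
    simp only [smul_eq_mul] at hJ
    have harg : ‖v ω‖ ^ 2 / (n * σ ^ 2) = ∑ i : Fin n, (1 / n : ℝ) * ((v ω i) ^ 2 / σ ^ 2) := by
      rw [hnorm, Finset.sum_div]
      refine Finset.sum_congr rfl fun i _ => ?_
      field_simp
    rw [harg]
    exact hJ
  have hmeasf : Measurable (fun ω => Real.exp (‖v ω‖ ^ 2 / (n * σ ^ 2))) :=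
    Real.measurable_exp.comp ((hv.norm.pow_const 2).div_const _)
  have hg : Integrable (fun ω => ∑ i : Fin n, (1 / n : ℝ) * Real.exp ((v ω i) ^ 2 / σ ^ 2)) P :=
    integrable_finset_sum _ fun i _ => (hint i).const_mul _
  have hf : Integrable (fun ω => Real.exp (‖v ω‖ ^ 2 / (n * σ ^ 2))) P := by
    refine hg.mono' hmeasf.aestronglyMeasurable (ae_of_all _ fun ω => ?_)
    rw [Real.norm_eq_abs, abs_of_pos (Real.exp_pos _)]
    exact hpt ω
  refine ⟨hf, ?_⟩
  calc ∫ ω, Real.exp (‖v ω‖ ^ 2 / (n * σ ^ 2)) ∂P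
      ≤ ∫ ω, ∑ i : Fin n, (1 / n : ℝ) * Real.exp ((v ω i) ^ 2 / σ ^ 2) ∂P :=
        integral_mono hf hg hpt
    _ = ∑ i : Fin n, (1 / n : ℝ) * ∫ ω, Real.exp ((v ω i) ^ 2 / σ ^ 2) ∂P := by
        rw [integral_finset_sum _ fun i _ => (hint i).const_mul _]
        simp_rw [integral_const_mul]
    _ ≤ ∑ _i : Fin n, (1 / n : ℝ) * Real.exp 1 :=
        Finset.sum_le_sum fun i _ => mul_le_mul_of_nonneg_left (hsub i) (by positivity)
    _ = Real.exp 1 := by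
        rw [Finset.sum_const, Finset.card_univ, Fintype.card_fin, nsmul_eq_mul]
        field_simp

set_option maxHeartbeats 1600000 in
/-- Consider the discrete-time system `x_{t+1} = Ā φ(x_t) + w_t`, `t = 0,…,T−1`, under
Assumption 1 (stability: `ρ = ‖Ā‖₂`, `φ` is `L`-Lipschitz in `ℓ2`-norm, `φ(0) = 0`, `ρL < 1`)
and Assumption 2 (sub-Gaussian disturbance: `E[exp((x₀^{(i)})²/σ²)] ≤ e` and a.s.
`E[exp((w_t^{(i)})²/σ²) | F_t] ≤ e` for all `t ≥ 0` and coordinates `i`, where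
`F_t = σ(x_0,…,x_t)`). Then for every `t ∈ {0,…,T−1}`, the `ψ2`-norm of `‖φ(x_t)‖₂` is at most
`√n L σ / (1 − ρL)`. -/
theorem stmt_9 {Ω : Type*} [MeasurableSpace Ω] (P : Measure Ω) [IsProbabilityMeasure P]
    (n m T : ℕ) (L ρ σ : ℝ) (hσ : 0 < σ)
    (φ : EuclideanSpace ℝ (Fin n) → EuclideanSpace ℝ (Fin m))
    (Abar : EuclideanSpace ℝ (Fin m) →L[ℝ] EuclideanSpace ℝ (Fin n))
    (x w : ℕ → Ω → EuclideanSpace ℝ (Fin n))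
    (hxmeas : ∀ t, Measurable (x t)) (hwmeas : ∀ t, Measurable (w t))
    (hdyn : ∀ t < T, ∀ ω, x (t + 1) ω = Abar (φ (x t ω)) + w t ω)
    -- Assumption 1 (stability)
    (hρ : ρ = ‖Abar‖) (hφL : ∀ a b, ‖φ a - φ b‖ ≤ L * ‖a - b‖) (hφ0 : φ 0 = 0)
    (hstab : ρ * L < 1)
    -- the filtration F_t = σ(x_0,…,x_t)
    (F : ℕ → MeasurableSpace Ω)
    (hF : ∀ t, F t = ⨆ s ∈ Set.Iic t, MeasurableSpace.comap (x s) inferInstance)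
    -- Assumption 2 (sub-Gaussian disturbance)
    (hx0int : ∀ i, Integrable (fun ω => Real.exp ((x 0 ω i) ^ 2 / σ ^ 2)) P)
    (hx0sub : ∀ i, ∫ ω, Real.exp ((x 0 ω i) ^ 2 / σ ^ 2) ∂P ≤ Real.exp 1)
    (hwint : ∀ t (i : Fin n), Integrable (fun ω => Real.exp ((w t ω i) ^ 2 / σ ^ 2)) P)
    (hwsub : ∀ t (i : Fin n),
      ∀ᵐ ω ∂P, (P[fun ω' => Real.exp ((w t ω' i) ^ 2 / σ ^ 2)|F t]) ω ≤ Real.exp 1) :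
    ∀ t < T,
      sInf {k : ℝ | 0 < k ∧ ∫ ω, Real.exp (‖φ (x t ω)‖ ^ 2 / k ^ 2) ∂P ≤ Real.exp 1} ≤
        Real.sqrt n * L * σ / (1 - ρ * L) := by
  intro t ht
  set r : ℝ := ρ * L with hrdef
  have hρ0 : 0 ≤ ρ := hρ ▸ norm_nonneg _
  have h1r : 0 < 1 - r := by linarith [hstab]
  -- helper for degenerate cases
  have hdeg : ∀ (Y : Ω → ℝ), (∀ ω, Y ω = 0) →
      sInf {k : ℝ | 0 < k ∧ ∫ ω, Real.exp (Y ω ^ 2 / k ^ 2) ∂P ≤ Real.exp 1} = 0 := by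
    intro Y hY
    have hset : {k : ℝ | 0 < k ∧ ∫ ω, Real.exp (Y ω ^ 2 / k ^ 2) ∂P ≤ Real.exp 1}
        = Set.Ioi 0 := by
      ext k
      simp only [Set.mem_setOf_eq, Set.mem_Ioi, and_iff_left_iff_imp]
      intro hk
      have he : (fun ω => Real.exp (Y ω ^ 2 / k ^ 2)) = fun _ => (1 : ℝ) := by
        funext ω; rw [hY ω]; norm_num
      rw [he]
      simp only [integral_const, probReal_univ, smul_eq_mul, mul_one]
      nlinarith [Real.add_one_le_exp 1]
    rw [hset, csInf_Ioi]
  by_cases hn : n = 0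
  · subst hn
    haveI : Subsingleton (EuclideanSpace ℝ (Fin 0)) := ⟨fun a b => by ext i; exact i.elim0⟩
    have hzero : ∀ ω, ‖φ (x t ω)‖ = 0 := by
      intro ω
      rw [Subsingleton.elim (x t ω) 0, hφ0, norm_zero]
    have h0 := hdeg (fun ω => ‖φ (x t ω)‖) hzero
    rw [h0]
    simp
  replace hn : 0 < n := Nat.pos_of_ne_zero hn
  have hn' : (0 : ℝ) < n := Nat.cast_pos.2 hn
  have hL0 : 0 ≤ L := by
    have h := (norm_nonneg (φ (EuclideanSpace.single (⟨0, hn⟩ : Fin n) (1 : ℝ)) -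
      φ 0)).trans (hφL (EuclideanSpace.single (⟨0, hn⟩ : Fin n) (1 : ℝ)) 0)
    rw [sub_zero, EuclideanSpace.norm_single, norm_one, mul_one] at h
    exact h
  rcases eq_or_lt_of_le hL0 with hL | hL
  · -- L = 0 : φ is constantly 0
    have hzero : ∀ ω, ‖φ (x t ω)‖ = 0 := by
      intro ω
      have h := hφL (x t ω) 0
      rw [← hL, zero_mul, hφ0, sub_zero] at h
      exact le_antisymm h (norm_nonneg _)
    have h0 := hdeg (fun ω => ‖φ (x t ω)‖) hzero
    rw [h0, ← hL]
    simp
  -- main case : 0 < n, 0 < L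
  have hr0 : 0 ≤ r := mul_nonneg hρ0 hL0
  set b : ℕ → ℝ := fun s => ∑ i ∈ Finset.range (s + 1), r ^ i with hbdef
  have hb1 : ∀ s, 1 ≤ b s := by
    intro s
    have h := Finset.single_le_sum (f := fun i => r ^ i)
      (fun i _ => pow_nonneg hr0 i) (Finset.mem_range.2 (Nat.succ_pos s))
    simpa [hbdef] using h
  have hbpos : ∀ s, 0 < b s := fun s => lt_of_lt_of_le one_pos (hb1 s)
  have hbsucc : ∀ s, b (s + 1) = r * b s + 1 := by
    intro s
    show ∑ i ∈ Finset.range (s + 1 + 1), r ^ i = r * ∑ i ∈ Finset.range (s + 1), r ^ i + 1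
    exact geom_sum_succ
  have hble : ∀ s, b s ≤ 1 / (1 - r) := by
    intro s
    have hgm : b s * (r - 1) = r ^ (s + 1) - 1 := geom_sum_mul r (s + 1)
    rw [le_div_iff₀ h1r]
    nlinarith [pow_nonneg hr0 (s + 1)]
  -- norm recursion
  have hrec : ∀ s < T, ∀ ω, ‖x (s + 1) ω‖ ≤ r * ‖x s ω‖ + ‖w s ω‖ := by
    intro s hs ω
    rw [hdyn s hs ω]
    refine (norm_add_le _ _).trans (add_le_add ?_ le_rfl)
    have h1 : ‖Abar (φ (x s ω))‖ ≤ ρ * ‖φ (x s ω)‖ := by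
      rw [hρ]; exact Abar.le_opNorm _
    have h2 : ‖φ (x s ω)‖ ≤ L * ‖x s ω‖ := by
      have h := hφL (x s ω) 0
      rwa [hφ0, sub_zero, sub_zero] at h
    calc ‖Abar (φ (x s ω))‖ ≤ ρ * ‖φ (x s ω)‖ := h1
      _ ≤ ρ * (L * ‖x s ω‖) := mul_le_mul_of_nonneg_left h2 hρ0
      _ = r * ‖x s ω‖ := by rw [hrdef]; ring
  have hσ2 : (0 : ℝ) < (n : ℝ) * σ ^ 2 := by positivity
  -- unconditional sub-Gaussian bound for w via conditional expectation
  have hwsub' : ∀ s (i : Fin n), ∫ ω, Real.exp ((w s ω i) ^ 2 / σ ^ 2) ∂P ≤ Real.exp 1 := by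
    intro s i
    have hFle : F s ≤ ‹MeasurableSpace Ω› := by
      rw [hF s]
      exact iSup₂_le fun u _ => (hxmeas u).comap_le
    haveI : SigmaFinite (P.trim hFle) := by
      haveI : IsFiniteMeasure (P.trim hFle) := isFiniteMeasure_trim hFle
      infer_instance
    have heq : ∫ ω, (P[fun ω' => Real.exp ((w s ω' i) ^ 2 / σ ^ 2)|F s]) ω ∂P
        = ∫ ω, Real.exp ((w s ω i) ^ 2 / σ ^ 2) ∂P := integral_condExp hFle
    rw [← heq]
    calc ∫ ω, (P[fun ω' => Real.exp ((w s ω' i) ^ 2 / σ ^ 2)|F s]) ω ∂P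
        ≤ ∫ _ω, Real.exp 1 ∂P :=
          integral_mono_ae integrable_condExp (integrable_const _) (hwsub s i)
      _ = Real.exp 1 := by simp
  have hwkey : ∀ s, Integrable (fun ω => Real.exp (‖w s ω‖ ^ 2 / (n * σ ^ 2))) P ∧
      ∫ ω, Real.exp (‖w s ω‖ ^ 2 / (n * σ ^ 2)) ∂P ≤ Real.exp 1 :=
    fun s => psg_coord P hn hσ (w s) (hwmeas s) (hwint s) (hwsub' s)
  -- key induction
  have key : ∀ s, s ≤ T →
      Integrable (fun ω => Real.exp (‖x s ω‖ ^ 2 / ((b s) ^ 2 * ((n : ℝ) * σ ^ 2)))) P ∧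
      ∫ ω, Real.exp (‖x s ω‖ ^ 2 / ((b s) ^ 2 * ((n : ℝ) * σ ^ 2))) ∂P ≤ Real.exp 1 := by
    intro s
    induction s with
    | zero =>
      intro _
      have hb0 : b 0 = 1 := by simp [hbdef]
      have h := psg_coord P hn hσ (x 0) (hxmeas 0) hx0int hx0sub
      simpa [hb0] using h
    | succ s ih =>
      intro hsT
      have hsT' : s < T := Nat.lt_of_succ_le hsT
      obtain ⟨ihint, ihle⟩ := ih hsT'.le
      obtain ⟨hwi, hwe⟩ := hwkey s
      have hBpos : 0 < b s := hbpos s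
      have hB'pos : 0 < b (s + 1) := hbpos (s + 1)
      set p : ℝ := r * b s / b (s + 1) with hp
      set q : ℝ := 1 / b (s + 1) with hq
      have hp0 : 0 ≤ p := by positivity
      have hq0 : 0 ≤ q := by positivity
      have hpq : p + q = 1 := by
        rw [hp, hq, ← add_div, ← hbsucc s, div_self hB'pos.ne']
      have hptw : ∀ ω,
          Real.exp (‖x (s + 1) ω‖ ^ 2 / ((b (s + 1)) ^ 2 * ((n : ℝ) * σ ^ 2)))
            ≤ p * Real.exp (‖x s ω‖ ^ 2 / ((b s) ^ 2 * ((n : ℝ) * σ ^ 2)))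
              + q * Real.exp (‖w s ω‖ ^ 2 / ((n : ℝ) * σ ^ 2)) := by
        intro ω
        set a := ‖x s ω‖ with ha
        set c := ‖w s ω‖ with hc
        have ha0 : 0 ≤ a := norm_nonneg _
        have hc0 : 0 ≤ c := norm_nonneg _
        have h1 : ‖x (s + 1) ω‖ ≤ r * a + c := hrec s hsT' ω
        have heq1 : (r * a + c) / b (s + 1) = p * (a / b s) + q * c := by
          rw [hp, hq]; field_simp
        have h3 : ((r * a + c) / b (s + 1)) ^ 2 ≤ p * (a / b s) ^ 2 + q * c ^ 2 := by
          have hconv := (Even.convexOn_pow (𝕜 := ℝ) even_two).2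
            (Set.mem_univ (a / b s)) (Set.mem_univ c) hp0 hq0 hpq
          simp only [smul_eq_mul] at hconv
          rw [heq1]
          exact hconv
        have hxd : ‖x (s + 1) ω‖ / b (s + 1) ≤ (r * a + c) / b (s + 1) := by gcongr
        have h4' : (‖x (s + 1) ω‖ / b (s + 1)) ^ 2 ≤ p * (a / b s) ^ 2 + q * c ^ 2 :=
          (pow_le_pow_left₀ (by positivity) hxd 2).trans h3
        have h4 : ‖x (s + 1) ω‖ ^ 2 / ((b (s + 1)) ^ 2 * ((n : ℝ) * σ ^ 2))
            ≤ (p * (a / b s) ^ 2 + q * c ^ 2) / ((n : ℝ) * σ ^ 2) := by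
          rw [← div_div, ← div_pow]
          gcongr
        have h5 : Real.exp (‖x (s + 1) ω‖ ^ 2 / ((b (s + 1)) ^ 2 * ((n : ℝ) * σ ^ 2)))
            ≤ Real.exp (p * ((a / b s) ^ 2 / ((n : ℝ) * σ ^ 2)) + q * (c ^ 2 / ((n : ℝ) * σ ^ 2))) := by
          refine Real.exp_le_exp.2 (h4.trans (le_of_eq ?_))
          field_simp
        have h6 : Real.exp (p * ((a / b s) ^ 2 / ((n : ℝ) * σ ^ 2)) + q * (c ^ 2 / ((n : ℝ) * σ ^ 2)))
            ≤ p * Real.exp ((a / b s) ^ 2 / ((n : ℝ) * σ ^ 2)) + q * Real.exp (c ^ 2 / ((n : ℝ) * σ ^ 2)) := by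
          have hconv := convexOn_exp.2 (Set.mem_univ ((a / b s) ^ 2 / ((n : ℝ) * σ ^ 2)))
            (Set.mem_univ (c ^ 2 / ((n : ℝ) * σ ^ 2))) hp0 hq0 hpq
          simpa [smul_eq_mul] using hconv
        have harg : (a / b s) ^ 2 / ((n : ℝ) * σ ^ 2) = a ^ 2 / ((b s) ^ 2 * ((n : ℝ) * σ ^ 2)) := by
          rw [div_pow, div_div]
        rw [harg] at h5 h6
        exact h5.trans h6
      have hmeas1 : Measurable
          (fun ω => Real.exp (‖x (s + 1) ω‖ ^ 2 / ((b (s + 1)) ^ 2 * ((n : ℝ) * σ ^ 2)))) :=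
        Real.measurable_exp.comp (((hxmeas (s + 1)).norm.pow_const 2).div_const _)
      have hgint : Integrable (fun ω =>
          p * Real.exp (‖x s ω‖ ^ 2 / ((b s) ^ 2 * ((n : ℝ) * σ ^ 2)))
            + q * Real.exp (‖w s ω‖ ^ 2 / ((n : ℝ) * σ ^ 2))) P :=
        (ihint.const_mul p).add (hwi.const_mul q)
      have hint1 : Integrable
          (fun ω => Real.exp (‖x (s + 1) ω‖ ^ 2 / ((b (s + 1)) ^ 2 * ((n : ℝ) * σ ^ 2)))) P := by
        refine hgint.mono' hmeas1.aestronglyMeasurable (ae_of_all _ fun ω => ?_)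
        rw [Real.norm_eq_abs, abs_of_pos (Real.exp_pos _)]
        exact hptw ω
      refine ⟨hint1, ?_⟩
      calc ∫ ω, Real.exp (‖x (s + 1) ω‖ ^ 2 / ((b (s + 1)) ^ 2 * ((n : ℝ) * σ ^ 2))) ∂P
          ≤ ∫ ω, (p * Real.exp (‖x s ω‖ ^ 2 / ((b s) ^ 2 * ((n : ℝ) * σ ^ 2)))
              + q * Real.exp (‖w s ω‖ ^ 2 / ((n : ℝ) * σ ^ 2))) ∂P :=
            integral_mono hint1 hgint hptw
        _ = p * ∫ ω, Real.exp (‖x s ω‖ ^ 2 / ((b s) ^ 2 * ((n : ℝ) * σ ^ 2))) ∂P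
              + q * ∫ ω, Real.exp (‖w s ω‖ ^ 2 / ((n : ℝ) * σ ^ 2)) ∂P := by
            rw [integral_add (ihint.const_mul p) (hwi.const_mul q),
              integral_const_mul, integral_const_mul]
        _ ≤ p * Real.exp 1 + q * Real.exp 1 :=
            add_le_add (mul_le_mul_of_nonneg_left ihle hp0)
              (mul_le_mul_of_nonneg_left hwe hq0)
        _ = Real.exp 1 := by rw [← add_mul, hpq, one_mul]
  -- conclusion
  obtain ⟨hti, htle⟩ := key t ht.le
  set k₀ : ℝ := Real.sqrt n * L * σ / (1 - r) with hk₀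
  have hk₀pos : 0 < k₀ := by
    rw [hk₀]
    exact div_pos (mul_pos (mul_pos (Real.sqrt_pos.2 hn') hL) hσ) h1r
  have hden : L ^ 2 * ((b t) ^ 2 * ((n : ℝ) * σ ^ 2)) ≤ k₀ ^ 2 := by
    have hk2 : k₀ ^ 2 = (n : ℝ) * L ^ 2 * σ ^ 2 / (1 - r) ^ 2 := by
      rw [hk₀, div_pow, mul_pow, mul_pow, Real.sq_sqrt hn'.le]
    have hb2 : (b t) ^ 2 ≤ (1 / (1 - r)) ^ 2 :=
      pow_le_pow_left₀ (hbpos t).le (hble t) 2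
    rw [hk2]
    calc L ^ 2 * ((b t) ^ 2 * ((n : ℝ) * σ ^ 2))
        ≤ L ^ 2 * ((1 / (1 - r)) ^ 2 * ((n : ℝ) * σ ^ 2)) :=
          mul_le_mul_of_nonneg_left (mul_le_mul_of_nonneg_right hb2 hσ2.le) (sq_nonneg L)
      _ = (n : ℝ) * L ^ 2 * σ ^ 2 / (1 - r) ^ 2 := by
          rw [one_div]
          field_simp
  have hptf : ∀ ω, Real.exp (‖φ (x t ω)‖ ^ 2 / k₀ ^ 2)
      ≤ Real.exp (‖x t ω‖ ^ 2 / ((b t) ^ 2 * ((n : ℝ) * σ ^ 2))) := by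
    intro ω
    refine Real.exp_le_exp.2 ?_
    have hφx : ‖φ (x t ω)‖ ^ 2 ≤ L ^ 2 * ‖x t ω‖ ^ 2 := by
      have h := hφL (x t ω) 0
      rw [hφ0, sub_zero, sub_zero] at h
      nlinarith [norm_nonneg (φ (x t ω)), norm_nonneg (x t ω)]
    have hdpos : (0 : ℝ) < L ^ 2 * ((b t) ^ 2 * ((n : ℝ) * σ ^ 2)) :=
      mul_pos (pow_pos hL 2) (mul_pos (pow_pos (hbpos t) 2) hσ2)
    calc ‖φ (x t ω)‖ ^ 2 / k₀ ^ 2 ≤ (L ^ 2 * ‖x t ω‖ ^ 2) / k₀ ^ 2 := by gcongr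
      _ ≤ (L ^ 2 * ‖x t ω‖ ^ 2) / (L ^ 2 * ((b t) ^ 2 * ((n : ℝ) * σ ^ 2))) := by
          exact div_le_div_of_nonneg_left (by positivity) hdpos hden
      _ = ‖x t ω‖ ^ 2 / ((b t) ^ 2 * ((n : ℝ) * σ ^ 2)) :=
          mul_div_mul_left _ _ (pow_pos hL 2).ne'
  have hfint : Integrable (fun ω => Real.exp (‖φ (x t ω)‖ ^ 2 / k₀ ^ 2)) P := by
    refine hti.mono' ?_ (ae_of_all _ fun ω => ?_)
    · have hφc : Continuous φ :=
        (LipschitzWith.of_dist_le_mul (K := Real.toNNReal L) fun u v => by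
          rw [dist_eq_norm, dist_eq_norm, Real.coe_toNNReal L hL0]
          exact hφL u v).continuous
      exact (Real.measurable_exp.comp
        (((hφc.measurable.comp (hxmeas t)).norm.pow_const 2).div_const _)).aestronglyMeasurable
    · rw [Real.norm_eq_abs, abs_of_pos (Real.exp_pos _)]
      exact hptf ω
  have hmem : k₀ ∈ {k : ℝ | 0 < k ∧ ∫ ω, Real.exp (‖φ (x t ω)‖ ^ 2 / k ^ 2) ∂P ≤ Real.exp 1} :=
    ⟨hk₀pos, (integral_mono hfint hti hptf).trans htle⟩
  exact csInf_le ⟨0, fun k hk => hk.1.le⟩ hmem
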